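/- arXiv:1802.06157 — 6 statements merged into one kernel-verified Lean document; each statement's English description precedes it below -/
import Mathlib

section
/- Let K be a field of characteristic 2, let a, b ∈ K be nonzero elements with a ≠ b, and set c = a/(a² + b²) and d = b/(a² + b²). Let N be an even positive integer and let P be an orthogonal binary N×N matrix, i.e. P Pᵀ = I over F₂. Then P_{a,b} · (P_{c,d})ᵀ = I over K; in particular (P_{c,d})ᵀ = (P_{a,b})⁻¹. -/
/-- For a binary matrix `P` and elements `a b` of `K`, `binSub a b P` is the matrix `P_{a,b}`
whose `(i,j)` entry is `a` if `P i j = 0` and `b` if `P i j = 1`. -/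
def binSub {K : Type*} [Field K] {R N : ℕ} (a b : K)
    (P : Matrix (Fin R) (Fin N) (ZMod 2)) : Matrix (Fin R) (Fin N) K :=
  Matrix.of fun i j => if P i j = 0 then a else b

theorem stmt0 (K : Type*) [Field K] [CharP K 2] (a b : K)
    (ha : a ≠ 0) (hb : b ≠ 0) (hab : a ≠ b)
    (c d : K) (hc : c = a / (a ^ 2 + b ^ 2)) (hd : d = b / (a ^ 2 + b ^ 2))
    (N : ℕ) (hN : 0 < N) (hNeven : Even N)
    (P : Matrix (Fin N) (Fin N) (ZMod 2)) (hP : P * P.transpose = 1) :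
    binSub a b P * (binSub c d P).transpose = 1 ∧
      (binSub c d P).transpose = (binSub a b P)⁻¹ := by
  have hs : a + b ≠ 0 := by
    intro h
    apply hab
    have : a = -b := eq_neg_of_add_eq_zero_left h
    rwa [CharTwo.neg_eq] at this
  have hs2 : a ^ 2 + b ^ 2 = (a + b) ^ 2 := (CharTwo.add_sq a b).symm
  have hs2ne : a ^ 2 + b ^ 2 ≠ 0 := by rw [hs2]; exact pow_ne_zero 2 hs
  -- coefficient identities
  have h2 : (a + b) * (c + d) = 1 := by
    rw [hc, hd, hs2]; field_simp
  have h1 : a * (c + d) + (a + b) * c = 0 := by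
    have he : a * (c + d) = (a + b) * c := by
      rw [hc, hd, hs2]; field_simp
    rw [he, CharTwo.add_self_eq_zero]
  set φ : ZMod 2 →+* K := ZMod.castHom dvd_rfl K with hφ
  have hsub : ∀ (x : ZMod 2), (if x = 0 then a else b) = a + (a + b) * φ x := by
    intro x
    fin_cases x
    · show (if (0 : ZMod 2) = 0 then a else b) = a + (a + b) * φ 0
      simp
    · show (if (1 : ZMod 2) = 0 then a else b) = a + (a + b) * φ 1
      rw [map_one, mul_one, if_neg one_ne_zero, ← add_assoc, CharTwo.add_self_eq_zero, zero_add]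
  have hcd : ∀ (x : ZMod 2), (if x = 0 then c else d) = c + (c + d) * φ x := by
    intro x
    fin_cases x
    · show (if (0 : ZMod 2) = 0 then c else d) = c + (c + d) * φ 0
      simp
    · show (if (1 : ZMod 2) = 0 then c else d) = c + (c + d) * φ 1
      rw [map_one, mul_one, if_neg one_ne_zero, ← add_assoc, CharTwo.add_self_eq_zero, zero_add]
  have hsq : ∀ x : ZMod 2, x * x = x := by decide
  have hrow : ∀ i : Fin N, ∑ k, P i k = (1 : ZMod 2) := by
    intro i
    have := congrArg (fun M => M i i) hP
    simpa [Matrix.mul_apply, Matrix.one_apply, hsq] using this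
  have hdot : ∀ i j : Fin N, ∑ k, P i k * P j k = (1 : Matrix (Fin N) (Fin N) (ZMod 2)) i j := by
    intro i j
    have := congrArg (fun M => M i j) hP
    simpa [Matrix.mul_apply] using this
  have hNK : (N : K) = 0 := by
    obtain ⟨m, hm⟩ := hNeven
    have h2z : (2 : K) = 0 := CharTwo.two_eq_zero
    have : (N : K) = 2 * m := by rw [hm]; push_cast; ring
    rw [this, h2z, zero_mul]
  have key : binSub a b P * (binSub c d P).transpose = 1 := by
    ext i j
    rw [Matrix.mul_apply]
    simp only [binSub, Matrix.transpose_apply, Matrix.of_apply]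
    have hterm : ∀ k : Fin N,
        (if P i k = 0 then a else b) * (if P j k = 0 then c else d) =
        a * c + a * (c + d) * φ (P j k) + (a + b) * c * φ (P i k)
          + (a + b) * (c + d) * (φ (P i k) * φ (P j k)) := by
      intro k
      rw [hsub, hcd]; ring
    rw [Finset.sum_congr rfl fun k _ => hterm k]
    rw [Finset.sum_add_distrib, Finset.sum_add_distrib, Finset.sum_add_distrib]
    rw [Finset.sum_const, ← Finset.mul_sum, ← Finset.mul_sum, ← Finset.mul_sum]
    have e1 : ∑ k, φ (P j k) = 1 := by rw [← map_sum, hrow, map_one]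
    have e2 : ∑ k, φ (P i k) = 1 := by rw [← map_sum, hrow, map_one]
    have e3 : ∑ k, φ (P i k) * φ (P j k) = φ ((1 : Matrix (Fin N) (Fin N) (ZMod 2)) i j) := by
      have := congrArg φ (hdot i j)
      rw [map_sum] at this
      simpa [map_mul] using this
    rw [e1, e2, e3]
    simp only [Finset.card_univ, Fintype.card_fin, nsmul_eq_mul, hNK, zero_mul]
    by_cases hij : i = j
    · subst hij
      simp only [Matrix.one_apply_eq, map_one, mul_one]
      rw [zero_add, h1, zero_add, h2]
    · simp only [Matrix.one_apply_ne hij, map_zero, mul_zero, add_zero, zero_add]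
      calc a * (c + d) * 1 + (a + b) * c * 1 = a * (c + d) + (a + b) * c := by ring
        _ = 0 := h1
  refine ⟨key, ?_⟩
  exact (Matrix.inv_eq_right_inv key).symm
end

section
/- Let K be a field of characteristic 2, let a, b ∈ K be nonzero elements with a ≠ b, and set c = a/(a² + b²) and d = b/(a² + b²). Let N be an even positive integer, let P be an orthogonal binary N×N matrix, let H be a binary R×N matrix (viewed over K), and let G ∈ K^{k×N} satisfy G Hᵀ = 0. Define G_pub = G (P_{c,d})ᵀ and H̃ = H (P_{a,b})ᵀ (products over K). Then G_pub H̃ᵀ = 0, i.e. the code generated by G_pub is contained in the code with parity-check matrix H̃. -/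
lemma binSub_eq {K : Type*} [Field K] [CharP K 2] (u v : K) (x : ZMod 2) :
    (if x = 0 then u else v) = u + (u + v) * (ZMod.castHom (dvd_refl 2) K x) := by
  have hx : x = 0 ∨ x = 1 := by revert x; decide
  rcases hx with h | h <;> subst h
  · simp
  · rw [if_neg (by decide : (1 : ZMod 2) ≠ 0), map_one, mul_one, ← add_assoc,
      CharTwo.add_self_eq_zero, zero_add]

theorem stmt1 (K : Type*) [Field K] [CharP K 2] (a b : K)
    (ha : a ≠ 0) (hb : b ≠ 0) (hab : a ≠ b)
    (c d : K) (hc : c = a / (a ^ 2 + b ^ 2)) (hd : d = b / (a ^ 2 + b ^ 2))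
    (N R k : ℕ) (hN : 0 < N) (hNeven : Even N)
    (P : Matrix (Fin N) (Fin N) (ZMod 2)) (hP : P * P.transpose = 1)
    (H : Matrix (Fin R) (Fin N) (ZMod 2))
    (G : Matrix (Fin k) (Fin N) K)
    (hGH : G * (H.map (ZMod.castHom (dvd_refl 2) K)).transpose = 0)
    (Gpub : Matrix (Fin k) (Fin N) K) (hGpub : Gpub = G * (binSub c d P).transpose)
    (Htilde : Matrix (Fin R) (Fin N) K)
    (hHtilde : Htilde = H.map (ZMod.castHom (dvd_refl 2) K) * (binSub a b P).transpose) :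
    Gpub * Htilde.transpose = 0 := by
  set φ := ZMod.castHom (dvd_refl 2) K with hφ
  have hab' : a + b ≠ 0 := by
    intro h
    apply hab
    have : a = -b := by linear_combination h
    rwa [CharTwo.neg_eq] at this
  have hsq : a ^ 2 + b ^ 2 = (a + b) ^ 2 := by
    rw [CharTwo.add_sq]
  have hsq' : (a + b) ^ 2 ≠ 0 := pow_ne_zero _ hab'
  -- transpose orthogonality
  have hP' : P.transpose * P = 1 := mul_eq_one_comm.mp hP
  have hmulself : ∀ x : ZMod 2, x * x = x := by decide
  have hcol : ∀ i, (∑ l, P l i) = (1 : ZMod 2) := by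
    intro i
    have := congrFun (congrFun hP' i) i
    simp only [Matrix.mul_apply, Matrix.transpose_apply, Matrix.one_apply_eq] at this
    calc (∑ l, P l i) = ∑ l, P l i * P l i := by
          refine Finset.sum_congr rfl fun l _ => (hmulself _).symm
      _ = 1 := this
  have hS : ∀ i, (∑ l, φ (P l i)) = (1 : K) := by
    intro i
    rw [← map_sum, hcol, map_one]
  have hT : ∀ i j, (∑ l, φ (P l i) * φ (P l j)) = if i = j then (1 : K) else 0 := by
    intro i j
    have := congrFun (congrFun hP' i) j
    simp only [Matrix.mul_apply, Matrix.transpose_apply] at this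
    calc (∑ l, φ (P l i) * φ (P l j)) = φ (∑ l, P l i * P l j) := by
          rw [map_sum]; exact Finset.sum_congr rfl fun l _ => (map_mul φ _ _).symm
      _ = φ ((1 : Matrix (Fin N) (Fin N) (ZMod 2)) i j) := by rw [this]
      _ = if i = j then (1 : K) else 0 := by
          by_cases h : i = j <;> simp [Matrix.one_apply, h]
  have hef : (c + d) * (a + b) = 1 := by
    rw [hc, hd, hsq]
    field_simp
  have h0 : c * (a + b) + a * (c + d) = 0 := by
    rw [hc, hd, hsq]
    field_simp
    ring_nf
    linear_combination a * (CharTwo.two_eq_zero (R := K))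
  have hNsmul : ∀ x : K, N • x = 0 := by
    intro x
    obtain ⟨m, hm⟩ := hNeven
    rw [hm, add_nsmul, CharTwo.add_self_eq_zero]
  have key : (binSub c d P).transpose * (binSub a b P) = 1 := by
    ext i j
    simp only [Matrix.mul_apply, Matrix.transpose_apply, binSub, Matrix.of_apply]
    have expand : ∀ l : Fin N,
        (if P l i = 0 then c else d) * (if P l j = 0 then a else b)
        = c * a + (c * (a+b)) * φ (P l j) + (a * (c+d)) * φ (P l i)
          + ((c+d) * (a+b)) * (φ (P l i) * φ (P l j)) := by
      intro l
      rw [binSub_eq c d (P l i), binSub_eq a b (P l j)]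
      ring
    rw [Finset.sum_congr rfl fun l _ => expand l]
    simp only [Finset.sum_add_distrib, ← Finset.mul_sum]
    rw [hS i, hS j, hT i j, Finset.sum_const, Finset.card_univ, Fintype.card_fin, hNsmul]
    by_cases h : i = j
    · rw [if_pos h, h, Matrix.one_apply_eq]
      linear_combination h0 + hef
    · rw [if_neg h, Matrix.one_apply_ne h]
      linear_combination h0
  rw [hGpub, hHtilde, Matrix.transpose_mul, Matrix.transpose_transpose,
    Matrix.mul_assoc, ← Matrix.mul_assoc (binSub c d P).transpose, key, Matrix.one_mul]
  exact hGH
end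

section
/- Let K be a field of characteristic 2, let a, b ∈ K, let H be a binary R×N matrix (viewed over K) and let P be a binary N×N matrix. Then every entry of the matrix H̃ = H (P_{a,b})ᵀ (product over K) lies in the F₂-subspace of K spanned by a and b. In particular, H̃ is a parity-check matrix of low rank: the F₂-space generated by its coefficients has dimension at most 2. -/
attribute [local instance] ZMod.algebra

theorem stmt2 (K : Type*) [Field K] [CharP K 2] (a b : K)
    (R N : ℕ)
    (H : Matrix (Fin R) (Fin N) (ZMod 2))
    (P : Matrix (Fin N) (Fin N) (ZMod 2))
    (Htilde : Matrix (Fin R) (Fin N) K)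
    (hHtilde : Htilde = H.map (ZMod.castHom (dvd_refl 2) K) * (binSub a b P).transpose) :
    (∀ i j, Htilde i j ∈ Submodule.span (ZMod 2) ({a, b} : Set K)) ∧
      Module.finrank (ZMod 2)
        (Submodule.span (ZMod 2) (Set.range fun p : Fin R × Fin N => Htilde p.1 p.2)) ≤ 2 := by
  have ha : a ∈ Submodule.span (ZMod 2) ({a, b} : Set K) :=
    Submodule.subset_span (by simp)
  have hb : b ∈ Submodule.span (ZMod 2) ({a, b} : Set K) :=
    Submodule.subset_span (by simp)
  have hmem : ∀ i j, Htilde i j ∈ Submodule.span (ZMod 2) ({a, b} : Set K) := by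
    intro i j
    rw [hHtilde, Matrix.mul_apply]
    refine Submodule.sum_mem _ fun k _ => ?_
    have hterm : (binSub a b P).transpose k j ∈ Submodule.span (ZMod 2) ({a, b} : Set K) := by
      simp only [Matrix.transpose_apply, binSub, Matrix.of_apply]
      split <;> [exact ha; exact hb]
    have : H.map (ZMod.castHom (dvd_refl 2) K) i k = algebraMap (ZMod 2) K (H i k) := rfl
    rw [this]
    have := Submodule.smul_mem (Submodule.span (ZMod 2) ({a, b} : Set K)) (H i k) hterm
    rwa [Algebra.smul_def] at this
  refine ⟨hmem, ?_⟩
  classical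
  haveI : FiniteDimensional (ZMod 2) (Submodule.span (ZMod 2) ({a, b} : Set K)) :=
    FiniteDimensional.span_of_finite _ (Set.toFinite _)
  have hsub : Submodule.span (ZMod 2) (Set.range fun p : Fin R × Fin N => Htilde p.1 p.2) ≤
      Submodule.span (ZMod 2) ({a, b} : Set K) := by
    rw [Submodule.span_le]
    rintro x ⟨⟨i, j⟩, rfl⟩
    exact hmem i j
  calc Module.finrank (ZMod 2)
        (Submodule.span (ZMod 2) (Set.range fun p : Fin R × Fin N => Htilde p.1 p.2))
      ≤ Module.finrank (ZMod 2) (Submodule.span (ZMod 2) ({a, b} : Set K)) :=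
        Submodule.finrank_mono hsub
    _ ≤ ({a, b} : Finset K).card := by
        have := finrank_span_finset_le_card (R := ZMod 2) ({a, b} : Finset K)
        have hs : (((({a, b} : Finset K))) : Set K) = {a, b} := by simp
        rw [Set.finrank, hs] at this
        convert this using 2
    _ ≤ 2 := Finset.card_insert_le _ _ |>.trans (by simp)
end

section
/- Let K be a field of characteristic 2 and α ∈ K. Let H'' be an R×N matrix over K all of whose entries lie in {1, α}, let Q be an invertible R×R binary matrix, and set H⁽³⁾ = Q H'' (product over K, viewing Q over K). Then for every vector e = (e₁, …, e_N) ∈ K^N, Supp(H⁽³⁾ eᵀ) ⊆ (1+α)·Supp(e) + span_{F₂}{e₁ + ⋯ + e_N}, where (1+α)·Supp(e) denotes the image of Supp(e) under multiplication by 1+α. -/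
attribute [local instance] ZMod.algebra

/-- The support of a vector `x ∈ K^n`: the `F₂`-subspace of `K` spanned by its coordinates. -/
def Supp {K : Type*} [Field K] [CharP K 2] {n : ℕ} (x : Fin n → K) :
    Submodule (ZMod 2) K :=
  Submodule.span (ZMod 2) (Set.range x)

theorem stmt3 (K : Type*) [Field K] [CharP K 2] (α : K)
    (R N : ℕ)
    (H'' : Matrix (Fin R) (Fin N) K)
    (hH'' : ∀ i j, H'' i j = 1 ∨ H'' i j = α)
    (Q : Matrix (Fin R) (Fin R) (ZMod 2)) (hQ : IsUnit Q)
    (H3 : Matrix (Fin R) (Fin N) K)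
    (hH3 : H3 = Q.map (ZMod.castHom (dvd_refl 2) K) * H'')
    (e : Fin N → K) :
    Supp (H3.mulVec e) ≤
      (Supp e).map (LinearMap.mulLeft (ZMod 2) (1 + α)) ⊔
        Submodule.span (ZMod 2) ({∑ j, e j} : Set K) := by
  set T := (Supp e).map (LinearMap.mulLeft (ZMod 2) (1 + α)) ⊔
        Submodule.span (ZMod 2) ({∑ j, e j} : Set K) with hTdef
  rw [Supp, Submodule.span_le]
  rintro x ⟨i, rfl⟩
  have key : ∀ k : Fin R, (∑ j, H'' k j * e j) ∈ T := by
    classical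
    intro k
    have h2 : (2 : K) = 0 := CharTwo.two_eq_zero
    have hsum : (∑ j, H'' k j * e j)
        = (1 + α) * (∑ j ∈ Finset.univ.filter (fun j => H'' k j = α), e j)
          + ∑ j, e j := by
      rw [Finset.mul_sum, Finset.sum_filter, ← Finset.sum_add_distrib]
      apply Finset.sum_congr rfl
      intro j _
      by_cases hα : H'' k j = α
      · rw [if_pos hα, hα]
        linear_combination (-(e j)) * h2
      · rcases hH'' k j with h | h
        · rw [if_neg hα, h, one_mul, zero_add]
        · exact absurd h hα
    rw [hsum]
    apply add_mem
    · apply le_sup_left (α := Submodule (ZMod 2) K)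
      exact Submodule.mem_map_of_mem (Submodule.sum_mem _ fun j _ =>
        Submodule.subset_span ⟨j, rfl⟩)
    · exact le_sup_right (α := Submodule (ZMod 2) K)
        (Submodule.mem_span_singleton_self _)
  have hrow : H3.mulVec e i
      = ∑ k, ((ZMod.castHom (dvd_refl 2) K) (Q i k)) * (∑ j, H'' k j * e j) := by
    simp only [hH3, Matrix.mulVec, dotProduct, Matrix.mul_apply, Matrix.map_apply,
      Finset.sum_mul, Finset.mul_sum]
    rw [Finset.sum_comm]
    simp [mul_assoc]
  rw [hrow]
  apply Submodule.sum_mem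
  intro k _
  have hsm : ((ZMod.castHom (dvd_refl 2) K) (Q i k)) * (∑ j, H'' k j * e j)
      = (Q i k) • (∑ j, H'' k j * e j) := by
    rw [Algebra.smul_def]
    rfl
  rw [hsm]
  exact Submodule.smul_mem _ _ (key k)
end

section
/- Let K be a field of characteristic 2, let a, b ∈ K with a ≠ b, and let R ≥ 2. Let M be an R×N matrix over K all of whose entries lie in {a, b} and whose rows are linearly independent over K, and let G ∈ K^{k×N} satisfy G Mᵀ = 0. Then there exists an (R−1)×N matrix H⁽⁴⁾ over K all of whose entries lie in {0, 1}, whose rows are linearly independent over K (i.e. H⁽⁴⁾ has full rank R−1), and which satisfies G (H⁽⁴⁾)ᵀ = 0. -/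
theorem stmt9 (K : Type*) [Field K] [CharP K 2] (a b : K) (hab : a ≠ b)
    (R N k : ℕ) (hR : 2 ≤ R)
    (M : Matrix (Fin R) (Fin N) K)
    (hM : ∀ i j, M i j = a ∨ M i j = b)
    (hMrows : LinearIndependent K (fun i : Fin R => M i))
    (G : Matrix (Fin k) (Fin N) K)
    (hG : G * M.transpose = 0) :
    ∃ H4 : Matrix (Fin (R - 1)) (Fin N) K,
      (∀ i j, H4 i j = 0 ∨ H4 i j = 1) ∧
      LinearIndependent K (fun i : Fin (R - 1) => H4 i) ∧
      G * H4.transpose = 0 := by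
  obtain ⟨R', rfl⟩ : ∃ R', R = R' + 1 := ⟨R - 1, by omega⟩
  show ∃ H4 : Matrix (Fin R') (Fin N) K, _ ∧ LinearIndependent K (fun i : Fin R' => H4 i) ∧ G * H4.transpose = 0
  have hab0 : a + b ≠ 0 := fun h => hab (by
    have hbb : b + b = 0 := CharTwo.add_self_eq_zero b
    have : a = a + b + b := by rw [add_assoc, hbb, add_zero]
    rw [h, zero_add] at this; exact this)
  set c : K := (a + b)⁻¹ with hc
  have hc0 : c ≠ 0 := inv_ne_zero hab0
  refine ⟨fun i j => c * (M i.succ j + M 0 j), ?_, ?_, ?_⟩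
  · intro i j
    dsimp only
    rcases hM i.succ j with h1 | h1 <;> rcases hM 0 j with h2 | h2 <;>
      rw [h1, h2]
    · left; rw [CharTwo.add_self_eq_zero, mul_zero]
    · right; exact inv_mul_cancel₀ hab0
    · right; rw [add_comm b a]; exact inv_mul_cancel₀ hab0
    · left; rw [CharTwo.add_self_eq_zero, mul_zero]
  · rw [Fintype.linearIndependent_iff]
    intro g hg i
    have key := Fintype.linearIndependent_iff.mp hMrows
      (Fin.cases (∑ i, g i * c) (fun i => g i * c)) ?_
    · have h1 := key i.succ
      simp only [Fin.cases_succ] at h1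
      exact (mul_eq_zero.mp h1).resolve_right hc0
    · rw [Fin.sum_univ_succ]
      simp only [Fin.cases_succ, Fin.cases_zero]
      have : ∀ i : Fin R', (g i * c) • M i.succ
          = g i • (fun j => c * (M i.succ j + M 0 j)) + (g i * c) • (-(M 0)) := by
        intro i; funext j
        simp only [Pi.add_apply, Pi.smul_apply, Pi.neg_apply, smul_eq_mul]
        ring
      simp only [this, Finset.sum_add_distrib, ← Finset.sum_smul]
      rw [hg]
      funext j
      simp only [Pi.add_apply, Pi.smul_apply, Pi.neg_apply, Pi.zero_apply, smul_eq_mul]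
      ring
  · ext x i
    simp only [Matrix.mul_apply, Matrix.transpose_apply, Matrix.zero_apply]
    have h1 : ∀ r : Fin (R' + 1), ∑ j, G x j * M r j = 0 := by
      intro r
      have := congrFun (congrFun hG x) r
      simpa [Matrix.mul_apply, Matrix.transpose_apply] using this
    have : ∀ j, G x j * (c * (M i.succ j + M 0 j))
        = c * (G x j * M i.succ j) + c * (G x j * M 0 j) := fun j => by ring
    change ∑ j, G x j * (c * (M i.succ j + M 0 j)) = 0
    simp only [this, Finset.sum_add_distrib, ← Finset.mul_sum, h1, mul_zero, add_zero]
end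

section
/- Let K be a field of characteristic 2, let a, b ∈ K be nonzero with a ≠ b, let N be an even positive integer, and let P be an orthogonal binary N×N matrix (P Pᵀ = I over F₂). If H is a binary R×N matrix whose rank over K is R, then the matrix H (P_{a,b})ᵀ (product over K) also has rank R over K. -/
theorem stmt14 (K : Type*) [Field K] [CharP K 2] (a b : K)
    (ha : a ≠ 0) (hb : b ≠ 0) (hab : a ≠ b)
    (N R : ℕ) (hN : 0 < N) (hNeven : Even N)
    (P : Matrix (Fin N) (Fin N) (ZMod 2)) (hP : P * P.transpose = 1)
    (H : Matrix (Fin R) (Fin N) (ZMod 2))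
    (hH : (H.map (ZMod.castHom (dvd_refl 2) K)).rank = R) :
    (H.map (ZMod.castHom (dvd_refl 2) K) * (binSub a b P).transpose).rank = R := by
  haveI : CharP K 2 := inferInstance
  set f : ZMod 2 →+* K := ZMod.castHom (dvd_refl 2) K with hf
  set c : K := a + b with hc
  have hc0 : c ≠ 0 := by
    intro h
    apply hab
    have : a = -b := by linear_combination h
    simpa [CharTwo.neg_eq] using this
  set Q : Matrix (Fin N) (Fin N) K := binSub a b P with hQ
  -- entrywise formula
  have hQentry : ∀ i k, Q i k = a + c * f (P i k) := by
    intro i k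
    have h2 : P i k = 0 ∨ P i k = 1 := by
      have : ∀ x : ZMod 2, x = 0 ∨ x = 1 := by decide
      exact this _
    rcases h2 with h | h <;> simp [hQ, binSub, h, hc]
    ring_nf
    rw [CharTwo.two_eq_zero, mul_zero, zero_add]
  -- row sums of P are 1 over ZMod 2
  have hrow : ∀ i, (∑ k, f (P i k)) = 1 := by
    intro i
    have h1 : (∑ k, P i k * P i k) = 1 := by
      have := congrFun (congrFun hP i) i
      simpa [Matrix.mul_apply, Matrix.transpose_apply, Matrix.one_apply] using this
    have hsq : ∀ x : ZMod 2, x * x = x := by decide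
    simp only [hsq] at h1
    rw [← map_sum, h1, map_one]
  have hinner : ∀ i j, (∑ k, f (P i k) * f (P j k)) = if i = j then 1 else 0 := by
    intro i j
    have := congrFun (congrFun hP i) j
    simp only [Matrix.mul_apply, Matrix.transpose_apply] at this
    calc (∑ k, f (P i k) * f (P j k)) = f (∑ k, P i k * P j k) := by
          rw [map_sum]; simp
      _ = f ((1 : Matrix (Fin N) (Fin N) (ZMod 2)) i j) := by rw [this]
      _ = if i = j then 1 else 0 := by
          by_cases h : i = j <;> simp [Matrix.one_apply, h]
  have hNK : (N : K) = 0 := by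
    obtain ⟨m, hm⟩ := hNeven
    have : (N : K) = 2 * m := by push_cast [hm]; ring
    rw [this, CharTwo.two_eq_zero, zero_mul]
  -- Q * Qᵀ = c² • 1
  have hQQ : Q * Q.transpose = (c * c) • 1 := by
    ext i j
    simp only [Matrix.mul_apply, Matrix.transpose_apply, Matrix.smul_apply,
      Matrix.one_apply, smul_eq_mul]
    calc (∑ k, Q i k * Q j k)
        = ∑ k, (a * a + a * c * f (P j k) + a * c * f (P i k)
            + (c * c) * (f (P i k) * f (P j k))) := by
          apply Finset.sum_congr rfl
          intro k _
          rw [hQentry i k, hQentry j k]; ring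
      _ = (N : K) * (a * a) + a * c * (∑ k, f (P j k)) + a * c * (∑ k, f (P i k))
            + (c * c) * (∑ k, f (P i k) * f (P j k)) := by
          simp [Finset.sum_add_distrib, Finset.mul_sum, Finset.sum_const, mul_comm]
      _ = (c * c) * (if i = j then 1 else 0) := by
          rw [hrow, hrow, hinner, hNK]
          rw [zero_mul, zero_add, mul_one, CharTwo.add_self_eq_zero, zero_add]
      _ = c * c * (if i = j then 1 else 0) := rfl
  -- Qᵀ has unit determinant
  have hdet : IsUnit Q.transpose.det := by
    have hdet2 : Q.det * Q.transpose.det = (c * c) ^ N := by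
      rw [← Matrix.det_mul, hQQ, Matrix.det_smul, Matrix.det_one, mul_one,
        Fintype.card_fin]
    have hne : Q.transpose.det ≠ 0 := by
      intro h
      rw [h, mul_zero] at hdet2
      exact (pow_ne_zero N (mul_ne_zero hc0 hc0)) hdet2.symm
    exact isUnit_iff_ne_zero.mpr hne
  rw [Matrix.rank_mul_eq_left_of_isUnit_det _ _ hdet, hH]
end
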